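/- Let F be a quadratic map of the plane with coefficients aᵢ, bᵢ such that det DF(x,y) = xy − 1 for all (x,y) ∈ ℝ², and define α(t) = F(t, 1/t) for t ≠ 0. Then X₃₀ := a₃b₀ − a₀b₃ ≠ 0; setting T = (−1/(2X₃₀))^{1/3} (the real cube root), one has for t ≠ 0 that α′(t) = (0,0) if and only if t = T; and α₁″(T)α₂‴(T) − α₁‴(T)α₂″(T) ≠ 0, so the image of the branch containing (T, 1/T) has a single nondegenerate cusp. -/

import Mathlib

lemma deriv_aux (c2 c1 c0 cm1 cm2 cm3 cm4 : ℝ) {t : ℝ} (ht : t ≠ 0) :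
    HasDerivAt (fun x : ℝ => c2*x^2 + c1*x + c0 + cm1/x + cm2/x^2 + cm3/x^3 + cm4/x^4)
      (2*c2*t + c1 - cm1/t^2 - 2*cm2/t^3 - 3*cm3/t^4 - 4*cm4/t^5) t := by
  have h1 : HasDerivAt (fun x : ℝ => c2*x^2) (c2*(2*t^1)) t :=
    (hasDerivAt_pow 2 t).const_mul c2
  have h2 : HasDerivAt (fun x : ℝ => c1*x) (c1*1) t := (hasDerivAt_id t).const_mul c1
  have h3 : HasDerivAt (fun x : ℝ => c0) 0 t := hasDerivAt_const t c0
  have inv : ∀ n : ℕ, ∀ c : ℝ, HasDerivAt (fun x : ℝ => c/x^n)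
      (-(c * (↑n * t ^ (n - 1) * ((t ^ n) ^ 2)⁻¹))) t := by
    intro n c
    have := ((hasDerivAt_pow n t).inv (pow_ne_zero n ht)).const_mul c
    simpa [div_eq_mul_inv, mul_div_assoc] using this
  have := ((((((h1.add h2).add h3).add (inv 1 cm1)).add (inv 2 cm2)).add
      (inv 3 cm3)).add (inv 4 cm4))
  convert this using 1
  · rfl
  · rfl
  · funext x; simp only [Pi.add_apply]; ring
  norm_num
  field_simp
  ring

noncomputable def G0f (p0 p1 p2 p3 p4 p5 : ℝ) : ℝ → ℝ :=
  fun x => p0*x^2 + p3*x + (p1+p5) + p4/x + p2/x^2 + 0/x^3 + 0/x^4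
noncomputable def G1f (p0 p1 p2 p3 p4 p5 : ℝ) : ℝ → ℝ :=
  fun x => 0*x^2 + (2*p0)*x + p3 + 0/x + (-p4)/x^2 + (-2*p2)/x^3 + 0/x^4
noncomputable def G2f (p0 p1 p2 p3 p4 p5 : ℝ) : ℝ → ℝ :=
  fun x => 0*x^2 + 0*x + 2*p0 + 0/x + 0/x^2 + (2*p4)/x^3 + (6*p2)/x^4
noncomputable def G3f (p0 p1 p2 p3 p4 p5 : ℝ) : ℝ → ℝ :=
  fun x => -6*p4/x^4 - 24*p2/x^5

lemma hG01 (p0 p1 p2 p3 p4 p5 : ℝ) {t : ℝ} (ht : t ≠ 0) :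
    HasDerivAt (G0f p0 p1 p2 p3 p4 p5) (G1f p0 p1 p2 p3 p4 p5 t) t := by
  have := deriv_aux p0 p3 (p1+p5) p4 p2 0 0 ht
  unfold G0f G1f
  convert this using 1
  ring

lemma hG12 (p0 p1 p2 p3 p4 p5 : ℝ) {t : ℝ} (ht : t ≠ 0) :
    HasDerivAt (G1f p0 p1 p2 p3 p4 p5) (G2f p0 p1 p2 p3 p4 p5 t) t := by
  have := deriv_aux 0 (2*p0) p3 0 (-p4) (-2*p2) 0 ht
  unfold G1f G2f
  convert this using 1
  ring

lemma hG23 (p0 p1 p2 p3 p4 p5 : ℝ) {t : ℝ} (ht : t ≠ 0) :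
    HasDerivAt (G2f p0 p1 p2 p3 p4 p5) (G3f p0 p1 p2 p3 p4 p5 t) t := by
  have := deriv_aux 0 0 (2*p0) 0 0 (2*p4) (6*p2) ht
  unfold G2f G3f
  convert this using 1
  ring

set_option maxHeartbeats 1000000 in
theorem stmt8 (a0 a1 a2 a3 a4 a5 b0 b1 b2 b3 b4 b5 : ℝ)
    (hdet : ∀ x y : ℝ,
      (2*a0*x + a1*y + a3) * (b1*x + 2*b2*y + b4)
        - (a1*x + 2*a2*y + a4) * (2*b0*x + b1*y + b3) = x*y - 1)
    (α : ℝ → ℝ × ℝ)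
    (hα : α = fun t =>
      (a0*t^2 + a1*t*(1/t) + a2*(1/t)^2 + a3*t + a4*(1/t) + a5,
       b0*t^2 + b1*t*(1/t) + b2*(1/t)^2 + b3*t + b4*(1/t) + b5)) :
    a3*b0 - a0*b3 ≠ 0 ∧
    ∀ T : ℝ, T^3 = -1/(2*(a3*b0 - a0*b3)) →
      (∀ t : ℝ, t ≠ 0 → (deriv α t = 0 ↔ t = T)) ∧
      (iteratedDeriv 2 α T).1 * (iteratedDeriv 3 α T).2
        - (iteratedDeriv 3 α T).1 * (iteratedDeriv 2 α T).2 ≠ 0 := by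
  -- coefficient relations
  have e00 := hdet 0 0
  have e10 := hdet 1 0
  have em10 := hdet (-1) 0
  have e01 := hdet 0 1
  have e0m1 := hdet 0 (-1)
  have e11 := hdet 1 1
  have hG : a3*b4 - a4*b3 = -1 := by linear_combination e00
  have hA : a0*b1 - a1*b0 = 0 := by linear_combination (e10 + em10)/4 - e00/2
  have hDd : 2*(a0*b4) + a3*b1 - a1*b3 - 2*(a4*b0) = 0 := by
    linear_combination (e10 - em10)/2
  have hC : a1*b2 - a2*b1 = 0 := by linear_combination (e01 + e0m1)/4 - e00/2
  have hE : a1*b4 + 2*(a3*b2) - 2*(a2*b3) - a4*b1 = 0 := by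
    linear_combination (e01 - e0m1)/2
  have hB : a0*b2 - a2*b0 = 1/4 := by
    linear_combination e11/4 - (e10 + em10)/8 - (e01 + e0m1)/8 + e00/4 - hDd/4 - hE/4
  clear e00 e10 em10 e01 e0m1 e11 hdet
  -- Pluecker consequences
  have h13 : a1*b3 - a3*b1 = 0 := by
    linear_combination (-4*(a1*b3 - a3*b1))*hB + (4*(a2*b3 - a3*b2))*hA
      + (4*(a0*b3 - a3*b0))*hC
  have h04 : a0*b4 - a4*b0 = 0 := by linear_combination (hDd + h13)/2
  have h14 : a1*b4 - a4*b1 = 0 := by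
    linear_combination (-4*(a1*b4 - a4*b1))*hB + (4*(a2*b4 - a4*b2))*hA
      + (4*(a0*b4 - a4*b0))*hC
  have h23 : a3*b2 - a2*b3 = 0 := by linear_combination (hE - h14)/2
  have h3024 : (a3*b0 - a0*b3)*(a2*b4 - a4*b2) = 1/4 := by
    linear_combination (-(a3*b4 - a4*b3))*hB - (1/4)*hG - (a2*b3 - a3*b2)*h04
  have hX30 : a3*b0 - a0*b3 ≠ 0 := by
    intro h
    rw [h, zero_mul] at h3024
    norm_num at h3024
  clear hDd hE h13 h14
  refine ⟨hX30, ?_⟩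
  intro T hT
  have h2T : 2*(a3*b0 - a0*b3)*T^3 = -1 := by
    rw [hT]; field_simp
  have hT0 : T ≠ 0 := by
    intro h
    rw [h] at h2T
    norm_num at h2T
  -- derivative machinery
  have hopen : ∀ t : ℝ, t ≠ 0 → {x : ℝ | x ≠ 0} ∈ nhds t := fun t ht =>
    isOpen_ne.mem_nhds ht
  have hαeq : ∀ t : ℝ, t ≠ 0 →
      α =ᶠ[nhds t] fun x => (G0f a0 a1 a2 a3 a4 a5 x, G0f b0 b1 b2 b3 b4 b5 x) := by
    intro t ht
    filter_upwards [hopen t ht] with x hx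
    have hx' : x ≠ 0 := hx
    rw [hα]
    simp only [G0f, Prod.mk.injEq]
    constructor <;> · field_simp; ring
  have hd1 : ∀ t : ℝ, t ≠ 0 →
      deriv α t = (G1f a0 a1 a2 a3 a4 a5 t, G1f b0 b1 b2 b3 b4 b5 t) := fun t ht =>
    (((hG01 a0 a1 a2 a3 a4 a5 ht).prodMk (hG01 b0 b1 b2 b3 b4 b5 ht)).congr_of_eventuallyEq
      (hαeq t ht)).deriv
  have hd2 : ∀ t : ℝ, t ≠ 0 →
      deriv (deriv α) t = (G2f a0 a1 a2 a3 a4 a5 t, G2f b0 b1 b2 b3 b4 b5 t) := by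
    intro t ht
    have heq : deriv α =ᶠ[nhds t]
        fun x => (G1f a0 a1 a2 a3 a4 a5 x, G1f b0 b1 b2 b3 b4 b5 x) := by
      filter_upwards [hopen t ht] with x hx using hd1 x hx
    rw [heq.deriv_eq]
    exact ((hG12 a0 a1 a2 a3 a4 a5 ht).prodMk (hG12 b0 b1 b2 b3 b4 b5 ht)).deriv
  have hd3 : ∀ t : ℝ, t ≠ 0 →
      deriv (deriv (deriv α)) t = (G3f a0 a1 a2 a3 a4 a5 t, G3f b0 b1 b2 b3 b4 b5 t) := by
    intro t ht
    have heq : deriv (deriv α) =ᶠ[nhds t]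
        fun x => (G2f a0 a1 a2 a3 a4 a5 x, G2f b0 b1 b2 b3 b4 b5 x) := by
      filter_upwards [hopen t ht] with x hx using hd2 x hx
    rw [heq.deriv_eq]
    exact ((hG23 a0 a1 a2 a3 a4 a5 ht).prodMk (hG23 b0 b1 b2 b3 b4 b5 ht)).deriv
  constructor
  · -- the iff
    intro t ht
    constructor
    · intro h
      rw [hd1 t ht] at h
      have ha : G1f a0 a1 a2 a3 a4 a5 t = 0 := congrArg Prod.fst h
      have hb : G1f b0 b1 b2 b3 b4 b5 t = 0 := congrArg Prod.snd h
      simp only [G1f] at ha hb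
      field_simp at ha hb
      have hpa : 2*a0*t^4 + a3*t^3 - a4*t - 2*a2 = 0 := by
        have h2' : t^2*(2*a0*t^4 + a3*t^3 - a4*t - 2*a2) = 0 := by linear_combination t*ha
        exact (mul_eq_zero.mp h2').resolve_left (pow_ne_zero 2 ht)
      have hpb : 2*b0*t^4 + b3*t^3 - b4*t - 2*b2 = 0 := by
        have h2' : t^2*(2*b0*t^4 + b3*t^3 - b4*t - 2*b2) = 0 := by linear_combination t*hb
        exact (mul_eq_zero.mp h2').resolve_left (pow_ne_zero 2 ht)
      have h1 : (a3*b0 - a0*b3)*(2*(t^3 - T^3)) = 0 := by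
        linear_combination 2*b0*hpa - 2*a0*hpb - 2*t*h04 - 4*hB - h2T
      have hcube : t^3 = T^3 := by
        have h2 := (mul_eq_zero.mp h1).resolve_left hX30
        linear_combination h2/2
      have hfac : (t - T) * (t^2 + t*T + T^2) = 0 := by linear_combination hcube
      rcases mul_eq_zero.mp hfac with h' | h'
      · linarith [sub_eq_zero.mp h']
      · exfalso
        have hT2 : (0:ℝ) < T^2 := by positivity
        nlinarith [sq_nonneg (2*t + T)]
    · rintro rfl
      rw [hd1 t hT0]
      have hpa : 2*a0*t^4 + a3*t^3 - a4*t - 2*a2 = 0 := by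
        have key : (a3*b0 - a0*b3) * (2*a0*t^4 + a3*t^3 - a4*t - 2*a2) = 0 := by
          linear_combination (a3/2)*h2T + (a3*t)*h04 + (2*a3)*hB + (a0*t)*h2T
            - (a0*t)*hG - (2*a0)*h23
        exact (mul_eq_zero.mp key).resolve_left hX30
      have hpb : 2*b0*t^4 + b3*t^3 - b4*t - 2*b2 = 0 := by
        have key : (a3*b0 - a0*b3) * (2*b0*t^4 + b3*t^3 - b4*t - 2*b2) = 0 := by
          linear_combination (b3/2)*h2T + (b3*t)*h04 + (2*b3)*hB + (b0*t)*h2T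
            - (b0*t)*hG - (2*b0)*h23
        exact (mul_eq_zero.mp key).resolve_left hX30
      have ha : G1f a0 a1 a2 a3 a4 a5 t = 0 := by
        simp only [G1f]
        field_simp
        linear_combination t*hpa
      have hb : G1f b0 b1 b2 b3 b4 b5 t = 0 := by
        simp only [G1f]
        field_simp
        linear_combination t*hpb
      rw [ha, hb]
      rfl
  · -- nondegeneracy
    have i2 : iteratedDeriv 2 α T = (G2f a0 a1 a2 a3 a4 a5 T, G2f b0 b1 b2 b3 b4 b5 T) := by
      rw [iteratedDeriv_succ, iteratedDeriv_one]
      exact hd2 T hT0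
    have i3 : iteratedDeriv 3 α T = (G3f a0 a1 a2 a3 a4 a5 T, G3f b0 b1 b2 b3 b4 b5 T) := by
      rw [iteratedDeriv_succ, iteratedDeriv_succ, iteratedDeriv_one]
      exact hd3 T hT0
    rw [i2, i3]
    have hX24 : a2*b4 - a4*b2 = -T^3/2 := by
      have h' : (2*(a3*b0 - a0*b3))*((a2*b4 - a4*b2) + T^3/2) = 0 := by
        linear_combination 2*h3024 + (1/2)*h2T
      have h'' := (mul_eq_zero.mp h').resolve_left
        (mul_ne_zero two_ne_zero hX30)
      linarith
    have key : ((G2f a0 a1 a2 a3 a4 a5 T)*(G3f b0 b1 b2 b3 b4 b5 T)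
        - (G3f a0 a1 a2 a3 a4 a5 T)*(G2f b0 b1 b2 b3 b4 b5 T)) * T^9 = -18*T^4 := by
      simp only [G2f, G3f]
      field_simp
      linear_combination (-12*T^5)*h04 + (-48*T^4)*hB + (12*T)*hX24
    intro h
    simp only at h
    rw [h, zero_mul] at key
    have h4 : T^4 = 0 := by linarith
    exact hT0 (by simpa using pow_eq_zero_iff (n := 4) (by norm_num) |>.mp h4)
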